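/- (Theorem 4.4, likelihood is maximized exactly at the consistent frequencies.) Fix a collection of itemsets C = {X_1,…,X_k} and a dataset D, and let Φ̂ = (fr(X_1|D),…,fr(X_k|D)). Let Φ = (f_1,…,f_k) ∈ [0,1]^k be any frequency vector such that a maximum-entropy distribution p*_{⟨C,Φ⟩} exists, and let p*_{⟨C,Φ̂⟩} be a maximum-entropy distribution for ⟨C,Φ̂⟩. Then p*_{⟨C,Φ⟩}(D) ≤ p*_{⟨C,Φ̂⟩}(D), and equality holds if and only if Φ = Φ̂. -/

import Mathlib

open scoped BigOperators

/-- A transaction over `N` items: an element of `{0,1}^N`. -/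
abbrev Transaction (N : ℕ) := Fin N → Bool

/-- A transaction `t` supports an itemset `X` iff `t i = 1` for all `i ∈ X`. -/
def supports {N : ℕ} (X : Finset (Fin N)) (t : Transaction N) : Prop :=
  ∀ i ∈ X, t i = true

instance {N : ℕ} (X : Finset (Fin N)) (t : Transaction N) : Decidable (supports X t) :=
  inferInstanceAs (Decidable (∀ i ∈ X, t i = true))

/-- A distribution on `{0,1}^N`: values in `[0,1]` summing to one. -/
def IsDistr {N : ℕ} (p : Transaction N → ℝ) : Prop :=
  (∀ t, 0 ≤ p t ∧ p t ≤ 1) ∧ ∑ t, p t = 1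

/-- `p(X = 1)`: the probability that a transaction supports `X`. -/
def probOne {N : ℕ} (p : Transaction N → ℝ) (X : Finset (Fin N)) : ℝ :=
  ∑ t, if supports X t then p t else 0

/-- Binary entropy `H(p) = -∑ p(t) log₂ p(t)` (with `0·log₂ 0 = 0`, as `Real.logb 2 0 = 0`). -/
noncomputable def entropy {N : ℕ} (p : Transaction N → ℝ) : ℝ :=
  - ∑ t, p t * Real.logb 2 (p t)

/-- Frequency of an itemset in a dataset (a multiset of transactions). -/
noncomputable def freq {N : ℕ} (X : Finset (Fin N)) (D : Multiset (Transaction N)) : ℝ :=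
  (D.countP (fun t => supports X t) : ℝ) / (Multiset.card D : ℝ)

/-- Likelihood of a dataset: `p(D) = ∏_{t ∈ D} p(t)`. -/
noncomputable def lhd {N : ℕ} (p : Transaction N → ℝ) (D : Multiset (Transaction N)) : ℝ :=
  (D.map p).prod

noncomputable def linForm {ι : Type*} [Fintype ι] (w : ι → ℝ) : (ι → ℝ) →ₗ[ℝ] ℝ where
  toFun d := ∑ i, w i * d i
  map_add' x y := by simp [mul_add, Finset.sum_add_distrib]
  map_smul' c x := by simp [Finset.mul_sum, mul_left_comm]

lemma linForm_apply {ι : Type*} [Fintype ι] (w d : ι → ℝ) :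
    linForm w d = ∑ i, w i * d i := rfl

lemma linForm_single {ι : Type*} [Fintype ι] [DecidableEq ι] (w : ι → ℝ) (i : ι) :
    linForm w (Pi.single i 1) = w i := by
  rw [linForm_apply]
  rw [Finset.sum_eq_single i]
  · simp
  · intro b _ hb; simp [Pi.single_apply, hb]
  · simp

lemma dual_span {ι κ : Type*} [Fintype ι] [Fintype κ] [DecidableEq ι]
    (w : κ → ι → ℝ) (v : ι → ℝ)
    (h : ∀ d : ι → ℝ, (∀ j, ∑ i, w j i * d i = 0) → ∑ i, v i * d i = 0) :
    ∃ μ : κ → ℝ, ∀ i, v i = ∑ j, μ j * w j i := by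
  have hker : (⨅ j, LinearMap.ker (linForm (w j))) ≤ LinearMap.ker (linForm v) := by
    intro d hd
    simp only [Submodule.mem_iInf, LinearMap.mem_ker, linForm_apply] at hd ⊢
    exact h d hd
  have hmem := mem_span_of_iInf_ker_le_ker hker
  rw [Submodule.mem_span_range_iff_exists_fun] at hmem
  obtain ⟨c, hc⟩ := hmem
  refine ⟨c, fun i => ?_⟩
  have h2 := congrArg (fun (L : (ι → ℝ) →ₗ[ℝ] ℝ) => L (Pi.single i 1)) hc
  simp only [LinearMap.coe_sum, Finset.sum_apply, LinearMap.smul_apply, smul_eq_mul,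
    linForm_single] at h2
  exact h2.symm

noncomputable def Fent {N : ℕ} (p : Transaction N → ℝ) : ℝ :=
  ∑ t, Real.negMulLog (p t)

lemma Fent_eq {N : ℕ} (p : Transaction N → ℝ) :
    Fent p = entropy p * Real.log 2 := by
  have h2 : Real.log 2 ≠ 0 := ne_of_gt (Real.log_pos one_lt_two)
  have hterm : ∀ t, Real.negMulLog (p t) = -(p t * Real.logb 2 (p t)) * Real.log 2 := by
    intro t
    rw [Real.negMulLog, Real.logb]
    field_simp
  simp only [Fent, hterm]
  rw [← Finset.sum_mul, entropy]
  congr 1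
  rw [← Finset.sum_neg_distrib]

lemma entropy_le_iff {N : ℕ} (p q : Transaction N → ℝ) :
    entropy p ≤ entropy q ↔ Fent p ≤ Fent q := by
  rw [Fent_eq, Fent_eq]
  constructor
  · intro h; exact mul_le_mul_of_nonneg_right h (Real.log_pos one_lt_two).le
  · intro h; exact le_of_mul_le_mul_right h (Real.log_pos one_lt_two)

lemma isDistr_of {N : ℕ} (p : Transaction N → ℝ) (h0 : ∀ t, 0 ≤ p t)
    (h1 : ∑ t, p t = 1) : IsDistr p := by
  refine ⟨fun t => ⟨h0 t, ?_⟩, h1⟩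
  calc p t ≤ ∑ t, p t := Finset.single_le_sum (fun s _ => h0 s) (Finset.mem_univ t)
  _ = 1 := h1

lemma probOne_linear {N : ℕ} (p d : Transaction N → ℝ) (ε : ℝ) (X : Finset (Fin N)) :
    probOne (fun t => p t + ε * d t) X = probOne p X + ε * probOne d X := by
  simp only [probOne, Finset.mul_sum, ← Finset.sum_add_distrib]
  refine Finset.sum_congr rfl fun t _ => ?_
  split_ifs <;> simp

lemma exists_ne_zero_of_distr {N : ℕ} (p : Transaction N → ℝ) (hp : IsDistr p) :
    ∃ t, p t ≠ 0 := by
  by_contra h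
  push_neg at h
  have := hp.2
  simp only [h] at this
  simp at this

lemma negMulLog_le_one {x : ℝ} (hx : 0 ≤ x) : Real.negMulLog x ≤ 1 := by
  rcases eq_or_lt_of_le hx with h | h
  · simp [← h]
  · have hlog : Real.log (1/x) ≤ 1/x - 1 := Real.log_le_sub_one_of_pos (by positivity)
    rw [Real.log_div one_ne_zero (ne_of_gt h), Real.log_one] at hlog
    have : Real.negMulLog x = x * (0 - Real.log x) := by rw [Real.negMulLog]; ring
    rw [this]
    calc x * (0 - Real.log x) ≤ x * (1/x - 1) := by
          apply mul_le_mul_of_nonneg_left _ hx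
          linarith
    _ = 1 - x := by field_simp
    _ ≤ 1 := by linarith

lemma exists_pos_perturb {N : ℕ} (p d : Transaction N → ℝ) (hp : ∀ t, 0 ≤ p t)
    (hd0 : ∀ t, p t = 0 → d t = 0) (hpne : ∃ t, p t ≠ 0) :
    ∃ δ : ℝ, 0 < δ ∧ ∀ ε : ℝ, |ε| < δ → ∀ t, 0 ≤ p t + ε * d t := by
  obtain ⟨t0, ht0⟩ := hpne
  have hne : (Finset.univ.filter (fun t => p t ≠ 0)).Nonempty :=
    ⟨t0, by simp [ht0]⟩
  set δ := (Finset.univ.filter (fun t => p t ≠ 0)).inf' hne (fun t => p t / (|d t| + 1)) with hδ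
  have hδpos : 0 < δ := by
    rw [hδ, Finset.lt_inf'_iff]
    intro t ht
    simp only [Finset.mem_filter] at ht
    have := lt_of_le_of_ne (hp t) (Ne.symm ht.2)
    positivity
  refine ⟨δ, hδpos, fun ε hε t => ?_⟩
  by_cases hpt : p t = 0
  · simp [hpt, hd0 t hpt]
  · have hle : δ ≤ p t / (|d t| + 1) :=
      Finset.inf'_le _ (by simp [hpt])
    have h1 : |ε * d t| < p t := by
      rw [abs_mul]
      calc |ε| * |d t| ≤ |ε| * (|d t| + 1) := by
            apply mul_le_mul_of_nonneg_left _ (abs_nonneg ε); linarith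
      _ < δ * (|d t| + 1) := by
            apply mul_lt_mul_of_pos_right hε; positivity
      _ ≤ (p t / (|d t| + 1)) * (|d t| + 1) := by
            apply mul_le_mul_of_nonneg_right hle; positivity
      _ = p t := by field_simp
    have := abs_lt.mp h1
    linarith [this.1]

lemma maxent_support_subset {N k : ℕ} (X : Fin k → Finset (Fin N)) (f : Fin k → ℝ)
    (p : Transaction N → ℝ) (hp : IsDistr p) (hpC : ∀ i, probOne p (X i) = f i)
    (hpMax : ∀ q : Transaction N → ℝ, IsDistr q → (∀ i, probOne q (X i) = f i) →
      entropy q ≤ entropy p)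
    (q : Transaction N → ℝ) (hq : IsDistr q) (hqC : ∀ i, probOne q (X i) = f i) :
    ∀ t, p t = 0 → q t = 0 := by
  by_contra hcon
  push_neg at hcon
  obtain ⟨t0, hp0, hq0⟩ := hcon
  have ha : 0 < q t0 := lt_of_le_of_ne (hq.1 t0).1 (Ne.symm hq0)
  set a := q t0 with haa
  set M := (Fintype.card (Transaction N) : ℝ) with hM
  have hM1 : 1 ≤ M := by
    rw [hM]
    exact_mod_cast Fintype.card_pos
  set ε := Real.exp (-((M+1)/a)) / a with hε
  have hεpos : 0 < ε := by positivity
  have hεa : ε * a = Real.exp (-((M+1)/a)) := by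
    rw [hε]; field_simp
  have ha1 : a ≤ 1 := (hq.1 t0).2
  have hε1 : ε ≤ 1 := by
    rw [hε, div_le_one ha]
    have hx : 0 < (M+1)/a := by positivity
    have hexp : (M+1)/a ≤ Real.exp ((M+1)/a) := by
      have := Real.add_one_le_exp ((M+1)/a); linarith
    calc Real.exp (-((M+1)/a)) = (Real.exp ((M+1)/a))⁻¹ := by rw [Real.exp_neg]
    _ ≤ ((M+1)/a)⁻¹ := by
          exact inv_anti₀ hx hexp
    _ = a / (M+1) := by rw [inv_div]
    _ ≤ a := by
          rw [div_le_iff₀ (by linarith : (0:ℝ) < M+1)]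
          nlinarith
  clear_value ε
  -- the mixture
  set qe := fun t => (1 - ε) * p t + ε * q t with hqe
  have hqeD : IsDistr qe := by
    apply isDistr_of
    · intro t
      have h1 := (hp.1 t).1
      have h2 := (hq.1 t).1
      have : 0 ≤ 1 - ε := by linarith
      positivity
    · simp only [hqe, Finset.sum_add_distrib, ← Finset.mul_sum, hp.2, hq.2]
      ring
  have hqeC : ∀ i, probOne qe (X i) = f i := by
    intro i
    have : probOne qe (X i) = (1-ε) * probOne p (X i) + ε * probOne q (X i) := by
      simp only [probOne, hqe, Finset.mul_sum, ← Finset.sum_add_distrib]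
      refine Finset.sum_congr rfl fun t _ => ?_
      split_ifs <;> simp
    rw [this, hpC, hqC]; ring
  have hEnt : Fent qe ≤ Fent p := (entropy_le_iff qe p).mp (hpMax qe hqeD hqeC)
  -- lower bound on Fent qe - Fent p
  have hterm : ∀ t, t ≠ t0 →
      Real.negMulLog (p t) + (-ε) ≤ Real.negMulLog (qe t) := by
    intro t _
    have h1 := (hp.1 t).1
    have h2 := (hq.1 t).1
    have hconc := Real.concaveOn_negMulLog.2 (Set.mem_Ici.mpr h1) (Set.mem_Ici.mpr h2)
      (by linarith : (0:ℝ) ≤ 1 - ε) hεpos.le (by ring)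
    have hnn : 0 ≤ Real.negMulLog (q t) := Real.negMulLog_nonneg h2 (hq.1 t).2
    have hub : Real.negMulLog (p t) ≤ 1 := negMulLog_le_one h1
    simp only [smul_eq_mul] at hconc
    have : qe t = (1-ε) * p t + ε * q t := rfl
    rw [this]
    nlinarith
  have ht0term : Real.negMulLog (qe t0) = ε * (M + 1) := by
    have h1 : qe t0 = ε * a := by rw [hqe]; simp [hp0]; exact Or.inl rfl
    have hlog : Real.log (ε * a) = -((M+1)/a) := by rw [hεa, Real.log_exp]
    rw [h1, Real.negMulLog, hlog]
    field_simp
  -- sum up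
  have hsum : Fent p + ε ≤ Fent qe := by
    have e1 : Fent qe = Real.negMulLog (qe t0) + ∑ t ∈ Finset.univ.erase t0, Real.negMulLog (qe t) := by
      rw [Fent, ← Finset.add_sum_erase _ _ (Finset.mem_univ t0)]
    have e2 : Fent p = Real.negMulLog (p t0) + ∑ t ∈ Finset.univ.erase t0, Real.negMulLog (p t) := by
      rw [Fent, ← Finset.add_sum_erase _ _ (Finset.mem_univ t0)]
    have e3 : ∑ t ∈ Finset.univ.erase t0, (Real.negMulLog (p t) + (-ε)) ≤
        ∑ t ∈ Finset.univ.erase t0, Real.negMulLog (qe t) := by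
      apply Finset.sum_le_sum
      intro t ht
      exact hterm t (Finset.ne_of_mem_erase ht)
    have hcard : ((Fintype.card (Transaction N) - 1 : ℕ) : ℝ) = M - 1 := by
      rw [Nat.cast_sub Fintype.card_pos]; simp [hM]
    have e4 : ∑ t ∈ Finset.univ.erase t0, (Real.negMulLog (p t) + (-ε)) =
        (∑ t ∈ Finset.univ.erase t0, Real.negMulLog (p t)) + (M - 1) * (-ε) := by
      rw [Finset.sum_add_distrib]
      congr 1
      rw [Finset.sum_const, Finset.card_erase_of_mem (Finset.mem_univ t0)]
      simp only [Finset.card_univ, nsmul_eq_mul, hcard]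
    have e5 : (∑ t ∈ Finset.univ.erase t0, Real.negMulLog (p t)) + (M - 1) * (-ε) ≤
        ∑ t ∈ Finset.univ.erase t0, Real.negMulLog (qe t) := by
      rw [← e4]; exact e3
    have hp0' : Real.negMulLog (p t0) = 0 := by rw [hp0]; simp
    rw [e1, e2, ht0term, hp0']
    nlinarith [hM1]
  linarith

lemma maxent_orth {N k : ℕ} (X : Fin k → Finset (Fin N)) (f : Fin k → ℝ)
    (p : Transaction N → ℝ) (hp : IsDistr p) (hpC : ∀ i, probOne p (X i) = f i)
    (hpMax : ∀ q : Transaction N → ℝ, IsDistr q → (∀ i, probOne q (X i) = f i) →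
      entropy q ≤ entropy p)
    (d : Transaction N → ℝ) (hd0 : ∀ t, p t = 0 → d t = 0)
    (hdsum : ∑ t, d t = 0) (hdC : ∀ i, probOne d (X i) = 0) :
    ∑ t, d t * Real.log (p t) = 0 := by
  obtain ⟨δ, hδpos, hδ⟩ := exists_pos_perturb p d (fun t => (hp.1 t).1) hd0
    (exists_ne_zero_of_distr p hp)
  set F : ℝ → ℝ := fun ε => ∑ t, Real.negMulLog (p t + ε * d t) with hF
  -- local max at 0
  have hmax : IsLocalMax F 0 := by
    have hmem : Set.Ioo (-δ) δ ∈ nhds (0:ℝ) := Ioo_mem_nhds (by linarith) hδpos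
    apply Filter.eventually_of_mem hmem
    intro ε hε
    have hεabs : |ε| < δ := by
      rw [abs_lt]; exact ⟨hε.1, hε.2⟩
    have hqD : IsDistr (fun t => p t + ε * d t) := by
      apply isDistr_of
      · exact hδ ε hεabs
      · rw [Finset.sum_add_distrib, hp.2, ← Finset.mul_sum, hdsum]; ring
    have hqC : ∀ i, probOne (fun t => p t + ε * d t) (X i) = f i := by
      intro i; rw [probOne_linear, hpC, hdC]; ring
    have := (entropy_le_iff _ p).mp (hpMax _ hqD hqC)
    have hF0 : F 0 = Fent p := by
      simp [hF, Fent]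
    rw [hF0]
    exact this
  -- derivative
  have hderiv : HasDerivAt F (∑ t, d t * (-Real.log (p t) - 1)) 0 := by
    rw [hF]
    apply HasDerivAt.fun_sum
    intro t _
    by_cases hpt : p t = 0
    · have hdt : d t = 0 := hd0 t hpt
      simp only [hdt, mul_zero, zero_mul, add_zero]
      simpa using (hasDerivAt_const (0:ℝ) (Real.negMulLog (p t)))
    · have hinner : HasDerivAt (fun ε : ℝ => p t + ε * d t) (d t) 0 := by
        simpa using ((hasDerivAt_id (0:ℝ)).mul_const (d t)).const_add (p t)
      have houter : HasDerivAt Real.negMulLog (-Real.log (p t) - 1) (p t + 0 * d t) := by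
        rw [zero_mul, add_zero]
        exact Real.hasDerivAt_negMulLog hpt
      have := houter.comp 0 hinner
      exact this.congr_deriv (by ring)
  have hzero := hmax.hasDerivAt_eq_zero hderiv
  have hexpand : ∑ t, d t * (-Real.log (p t) - 1) =
      -(∑ t, d t * Real.log (p t)) - ∑ t, d t := by
    rw [← Finset.sum_neg_distrib, ← Finset.sum_sub_distrib]
    refine Finset.sum_congr rfl fun t _ => by ring
  rw [hexpand, hdsum] at hzero
  linarith

lemma maxent_expForm {N k : ℕ} (X : Fin k → Finset (Fin N)) (f : Fin k → ℝ)
    (p : Transaction N → ℝ) (hp : IsDistr p) (hpC : ∀ i, probOne p (X i) = f i)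
    (hpMax : ∀ q : Transaction N → ℝ, IsDistr q → (∀ i, probOne q (X i) = f i) →
      entropy q ≤ entropy p) :
    ∃ (c : ℝ) (lam : Fin k → ℝ), ∀ t, p t ≠ 0 →
      Real.log (p t) = c + ∑ i, lam i * (if supports (X i) t then 1 else 0) := by
  classical
  set w : Option (Fin k) → Transaction N → ℝ := fun j t =>
    match j with
    | none => if p t ≠ 0 then 1 else 0
    | some i => if p t ≠ 0 ∧ supports (X i) t then 1 else 0
    with hw
  set v : Transaction N → ℝ := fun t => if p t = 0 then 0 else Real.log (p t) with hv
  have hdual : ∀ d : Transaction N → ℝ,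
      (∀ j, ∑ t, w j t * d t = 0) → ∑ t, v t * d t = 0 := by
    intro d hd
    set d' : Transaction N → ℝ := fun t => if p t = 0 then 0 else d t with hd'
    have hd0 : ∀ t, p t = 0 → d' t = 0 := fun t h => by simp [hd', h]
    have hdsum : ∑ t, d' t = 0 := by
      have h := hd none
      calc ∑ t, d' t = ∑ t, w none t * d t := by
            refine Finset.sum_congr rfl fun t _ => ?_
            by_cases h1 : p t = 0 <;> simp [hw, hd', h1]
      _ = 0 := h
    have hdC : ∀ i, probOne d' (X i) = 0 := by
      intro i
      have h := hd (some i)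
      calc probOne d' (X i) = ∑ t, w (some i) t * d t := by
            rw [probOne]
            refine Finset.sum_congr rfl fun t _ => ?_
            by_cases h1 : p t = 0 <;> by_cases h2 : supports (X i) t <;>
              simp [hw, hd', h1, h2]
      _ = 0 := h
    have horth := maxent_orth X f p hp hpC hpMax d' hd0 hdsum hdC
    calc ∑ t, v t * d t = ∑ t, d' t * Real.log (p t) := by
          refine Finset.sum_congr rfl fun t _ => ?_
          by_cases h1 : p t = 0 <;> simp [hv, hd', h1, mul_comm]
    _ = 0 := horth
  obtain ⟨μ, hμ⟩ := dual_span w v hdual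
  refine ⟨μ none, fun i => μ (some i), fun t hpt => ?_⟩
  have := hμ t
  rw [hv] at this
  simp only [hpt, if_false] at this
  rw [this, Fintype.sum_option]
  congr 1
  · simp [hw, hpt]
  · refine Finset.sum_congr rfl fun i _ => ?_
    simp only [hw]
    by_cases h2 : supports (X i) t <;> simp [hpt, h2]

lemma gibbs {N : ℕ} (p q : Transaction N → ℝ) (hp : IsDistr p) (hq : IsDistr q)
    (habs : ∀ t, q t ≠ 0 → p t ≠ 0) :
    ∑ t, q t * Real.log (p t) ≤ ∑ t, q t * Real.log (q t) ∧
      (∑ t, q t * Real.log (p t) = ∑ t, q t * Real.log (q t) → p = q) := by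
  classical
  set b : Transaction N → ℝ := fun t => if q t = 0 then 0 else p t - q t with hb
  have hterm : ∀ t, q t * Real.log (p t) - q t * Real.log (q t) ≤ b t := by
    intro t
    by_cases hqt : q t = 0
    · simp [hb, hqt]
    · have hq0 : 0 < q t := lt_of_le_of_ne (hq.1 t).1 (Ne.symm hqt)
      have hp0 : 0 < p t := lt_of_le_of_ne (hp.1 t).1 (Ne.symm (habs t hqt))
      have hlog : Real.log (p t / q t) ≤ p t / q t - 1 :=
        Real.log_le_sub_one_of_pos (by positivity)
      rw [Real.log_div (ne_of_gt hp0) (ne_of_gt hq0)] at hlog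
      simp only [hb, hqt, if_false]
      calc q t * Real.log (p t) - q t * Real.log (q t)
          = q t * (Real.log (p t) - Real.log (q t)) := by ring
      _ ≤ q t * (p t / q t - 1) := by
            apply mul_le_mul_of_nonneg_left _ hq0.le
            linarith
      _ = p t - q t := by field_simp
  have hbsum : ∑ t, b t ≤ 0 := by
    have h1 : ∑ t, b t = (∑ t ∈ Finset.univ.filter (fun t => q t ≠ 0), p t) - 1 := by
      rw [hb, ← hq.2]
      rw [Finset.sum_ite]
      simp only [Finset.sum_const_zero, zero_add, Finset.sum_sub_distrib]
      have : ∑ t ∈ Finset.univ.filter (fun t => ¬ q t = 0), q t = ∑ t, q t := by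
        apply Finset.sum_subset (Finset.filter_subset _ _)
        intro t _ ht
        simp only [Finset.mem_filter, Finset.mem_univ, true_and, not_not] at ht
        exact ht
      rw [this]
    have h2 : (∑ t ∈ Finset.univ.filter (fun t => q t ≠ 0), p t) ≤ ∑ t, p t := by
      apply Finset.sum_le_sum_of_subset_of_nonneg (Finset.filter_subset _ _)
      intro t _ _
      exact (hp.1 t).1
    rw [h1, hp.2] at *
    linarith
  have hsumterm : ∑ t, (q t * Real.log (p t) - q t * Real.log (q t)) ≤ ∑ t, b t :=
    Finset.sum_le_sum (fun t _ => hterm t)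
  have hmain : ∑ t, q t * Real.log (p t) ≤ ∑ t, q t * Real.log (q t) := by
    have h := le_trans hsumterm hbsum
    rw [Finset.sum_sub_distrib] at h
    linarith
  refine ⟨hmain, fun heq => ?_⟩
  -- equality case
  have hzero : ∑ t, (q t * Real.log (p t) - q t * Real.log (q t)) = 0 := by
    rw [Finset.sum_sub_distrib, heq]; ring
  have hbzero : ∑ t, b t = 0 := le_antisymm hbsum (by rw [← hzero]; exact hsumterm)
  have htermeq : ∀ t, q t * Real.log (p t) - q t * Real.log (q t) = b t := by
    have := (Finset.sum_eq_sum_iff_of_le (fun t (_ : t ∈ Finset.univ) => hterm t)).mp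
      (by rw [hzero, hbzero])
    intro t; exact (this t (Finset.mem_univ t)).symm ▸ (this t (Finset.mem_univ t))
  -- p = q on support of q
  have hon : ∀ t, q t ≠ 0 → p t = q t := by
    intro t hqt
    by_contra hne
    have hq0 : 0 < q t := lt_of_le_of_ne (hq.1 t).1 (Ne.symm hqt)
    have hp0 : 0 < p t := lt_of_le_of_ne (hp.1 t).1 (Ne.symm (habs t hqt))
    have hlt : Real.log (p t / q t) < p t / q t - 1 := by
      apply Real.log_lt_sub_one_of_pos (by positivity)
      intro hcon
      apply hne
      field_simp at hcon
      linarith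
    rw [Real.log_div (ne_of_gt hp0) (ne_of_gt hq0)] at hlt
    have := htermeq t
    simp only [hb, hqt, if_false] at this
    have hcontra : q t * Real.log (p t) - q t * Real.log (q t) < p t - q t := by
      calc q t * Real.log (p t) - q t * Real.log (q t)
          = q t * (Real.log (p t) - Real.log (q t)) := by ring
      _ < q t * (p t / q t - 1) := by
            apply mul_lt_mul_of_pos_left _ hq0
            linarith
      _ = p t - q t := by field_simp
    linarith
  -- off support: total masses force p = 0 there
  have hoff : ∀ t, q t = 0 → p t = 0 := by
    intro t hqt
    by_contra hne
    have hp0 : 0 < p t := lt_of_le_of_ne (hp.1 t).1 (Ne.symm hne)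
    have h1 : ∑ t ∈ Finset.univ.filter (fun t => q t ≠ 0), p t = 1 := by
      have h1' : ∑ s, b s = (∑ s ∈ Finset.univ.filter (fun s => q s ≠ 0), p s) - 1 := by
        rw [hb, ← hq.2]
        rw [Finset.sum_ite]
        simp only [Finset.sum_const_zero, zero_add, Finset.sum_sub_distrib]
        have : ∑ s ∈ Finset.univ.filter (fun s => ¬ q s = 0), q s = ∑ s, q s := by
          apply Finset.sum_subset (Finset.filter_subset _ _)
          intro s _ hs
          simp only [Finset.mem_filter, Finset.mem_univ, true_and, not_not] at hs
          exact hs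
        rw [this]
      rw [hbzero] at h1'
      linarith
    have h2 : ∑ s ∈ insert t (Finset.univ.filter (fun s => q s ≠ 0)), p s ≤ 1 := by
      rw [← hp.2]
      apply Finset.sum_le_sum_of_subset_of_nonneg (Finset.subset_univ _)
      intro s _ _; exact (hp.1 s).1
    rw [Finset.sum_insert (by simp [hqt])] at h2
    rw [h1] at h2
    linarith
  funext t
  by_cases hqt : q t = 0
  · rw [hqt]; exact hoff t hqt
  · exact hon t hqt

lemma crossSum {N k : ℕ} (X : Fin k → Finset (Fin N)) (p r : Transaction N → ℝ)
    (c : ℝ) (lam : Fin k → ℝ)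
    (hform : ∀ t, p t ≠ 0 →
      Real.log (p t) = c + ∑ i, lam i * (if supports (X i) t then 1 else 0))
    (habs : ∀ t, r t ≠ 0 → p t ≠ 0) (hrsum : ∑ t, r t = 1) :
    ∑ t, r t * Real.log (p t) = c + ∑ i, lam i * probOne r (X i) := by
  have hterm : ∀ t, r t * Real.log (p t) =
      r t * c + ∑ i, lam i * (if supports (X i) t then r t else 0) := by
    intro t
    by_cases hrt : r t = 0
    · simp [hrt]
    · rw [hform t (habs t hrt), mul_add, Finset.mul_sum]
      congr 1
      refine Finset.sum_congr rfl fun i _ => ?_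
      split_ifs <;> ring
  rw [Finset.sum_congr rfl (fun t _ => hterm t), Finset.sum_add_distrib,
    ← Finset.sum_mul, hrsum, one_mul, Finset.sum_comm]
  congr 1
  refine Finset.sum_congr rfl fun i _ => ?_
  rw [probOne, Finset.mul_sum]

lemma maxent_unique {N k : ℕ} (X : Fin k → Finset (Fin N)) (f : Fin k → ℝ)
    (p : Transaction N → ℝ) (hp : IsDistr p) (hpC : ∀ i, probOne p (X i) = f i)
    (hpMax : ∀ q : Transaction N → ℝ, IsDistr q → (∀ i, probOne q (X i) = f i) →
      entropy q ≤ entropy p)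
    (q : Transaction N → ℝ) (hq : IsDistr q) (hqC : ∀ i, probOne q (X i) = f i)
    (hqMax : ∀ r : Transaction N → ℝ, IsDistr r → (∀ i, probOne r (X i) = f i) →
      entropy r ≤ entropy q) :
    p = q := by
  by_contra hne
  have ⟨ts, hts⟩ : ∃ t, p t ≠ q t := by
    by_contra h; push_neg at h; exact hne (funext h)
  set m : Transaction N → ℝ := fun t => 2⁻¹ * p t + 2⁻¹ * q t with hm
  have hmD : IsDistr m := by
    apply isDistr_of
    · intro t; have := (hp.1 t).1; have := (hq.1 t).1; positivity
    · simp only [hm, Finset.sum_add_distrib, ← Finset.mul_sum, hp.2, hq.2]; norm_num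
  have hmC : ∀ i, probOne m (X i) = f i := by
    intro i
    have h : probOne m (X i) = 2⁻¹ * probOne p (X i) + 2⁻¹ * probOne q (X i) := by
      simp only [probOne, hm, Finset.mul_sum, ← Finset.sum_add_distrib]
      refine Finset.sum_congr rfl fun t _ => ?_
      split_ifs <;> simp
    rw [h, hpC, hqC]; ring
  have hEq : entropy p = entropy q :=
    le_antisymm (hqMax p hp hpC) (hpMax q hq hqC)
  have hFeq : Fent p = Fent q := by rw [Fent_eq, Fent_eq, hEq]
  have hle : ∀ t, (2⁻¹:ℝ) * Real.negMulLog (p t) + 2⁻¹ * Real.negMulLog (q t) ≤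
      Real.negMulLog (m t) := by
    intro t
    have hconc := Real.concaveOn_negMulLog.2 (Set.mem_Ici.mpr (hp.1 t).1)
      (Set.mem_Ici.mpr (hq.1 t).1) (by norm_num : (0:ℝ) ≤ 2⁻¹)
      (by norm_num : (0:ℝ) ≤ 2⁻¹) (by norm_num)
    simp only [smul_eq_mul] at hconc
    exact hconc
  have hlt : (2⁻¹:ℝ) * Real.negMulLog (p ts) + 2⁻¹ * Real.negMulLog (q ts) <
      Real.negMulLog (m ts) := by
    have hconc := Real.strictConcaveOn_negMulLog.2 (Set.mem_Ici.mpr (hp.1 ts).1)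
      (Set.mem_Ici.mpr (hq.1 ts).1) hts (by norm_num : (0:ℝ) < 2⁻¹)
      (by norm_num : (0:ℝ) < 2⁻¹) (by norm_num)
    simp only [smul_eq_mul] at hconc
    exact hconc
  have hsum : ∑ t, ((2⁻¹:ℝ) * Real.negMulLog (p t) + 2⁻¹ * Real.negMulLog (q t)) <
      ∑ t, Real.negMulLog (m t) :=
    Finset.sum_lt_sum (fun t _ => hle t) ⟨ts, Finset.mem_univ ts, hlt⟩
  have hsplit : ∑ t, ((2⁻¹:ℝ) * Real.negMulLog (p t) + 2⁻¹ * Real.negMulLog (q t)) =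
      2⁻¹ * Fent p + 2⁻¹ * Fent q := by
    rw [Finset.sum_add_distrib, ← Finset.mul_sum, ← Finset.mul_sum]; rfl
  have hstrict : Fent p < Fent m := by
    calc Fent p = 2⁻¹ * Fent p + 2⁻¹ * Fent q := by rw [hFeq]; ring
    _ = ∑ t, ((2⁻¹:ℝ) * Real.negMulLog (p t) + 2⁻¹ * Real.negMulLog (q t)) := hsplit.symm
    _ < ∑ t, Real.negMulLog (m t) := hsum
    _ = Fent m := rfl
  have := (entropy_le_iff m p).mp (hpMax m hmD hmC)
  linarith

lemma exists_pos_perturb' {N : ℕ} (p d : Transaction N → ℝ) (hp : ∀ t, 0 ≤ p t)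
    (hd0 : ∀ t, p t = 0 → 0 ≤ d t) (hpne : ∃ t, p t ≠ 0) :
    ∃ δ : ℝ, 0 < δ ∧ ∀ ε : ℝ, 0 ≤ ε → ε < δ → ∀ t, 0 ≤ p t + ε * d t := by
  obtain ⟨t0, ht0⟩ := hpne
  have hne : (Finset.univ.filter (fun t => p t ≠ 0)).Nonempty := ⟨t0, by simp [ht0]⟩
  set δ := (Finset.univ.filter (fun t => p t ≠ 0)).inf' hne (fun t => p t / (|d t| + 1)) with hδ
  have hδpos : 0 < δ := by
    rw [hδ, Finset.lt_inf'_iff]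
    intro t ht
    simp only [Finset.mem_filter] at ht
    have := lt_of_le_of_ne (hp t) (Ne.symm ht.2)
    positivity
  refine ⟨δ, hδpos, fun ε hε0 hε t => ?_⟩
  by_cases hpt : p t = 0
  · have := hd0 t hpt
    rw [hpt]
    positivity
  · have hle : δ ≤ p t / (|d t| + 1) := Finset.inf'_le _ (by simp [hpt])
    have h1 : |ε * d t| < p t := by
      rw [abs_mul, abs_of_nonneg hε0]
      calc ε * |d t| ≤ ε * (|d t| + 1) := by
            apply mul_le_mul_of_nonneg_left _ hε0; linarith
      _ < δ * (|d t| + 1) := by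
            apply mul_lt_mul_of_pos_right hε; positivity
      _ ≤ (p t / (|d t| + 1)) * (|d t| + 1) := by
            apply mul_le_mul_of_nonneg_right hle; positivity
      _ = p t := by field_simp
    have := abs_lt.mp h1
    linarith [this.1]

lemma probOne_sub {N : ℕ} (p q : Transaction N → ℝ) (X : Finset (Fin N)) :
    probOne (fun t => p t - q t) X = probOne p X - probOne q X := by
  simp only [probOne, ← Finset.sum_sub_distrib]
  refine Finset.sum_congr rfl fun t _ => ?_
  split_ifs <;> simp

lemma sum_count_univ {N : ℕ} (D : Multiset (Transaction N)) :
    ∑ t, D.count t = Multiset.card D := by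
  rw [← Multiset.toFinset_sum_count_eq D]
  symm
  apply Finset.sum_subset (Finset.subset_univ _)
  intro t _ ht
  rw [Multiset.count_eq_zero]
  intro hmem
  exact ht (Multiset.mem_toFinset.mpr hmem)

lemma countP_eq_sum {N : ℕ} (D : Multiset (Transaction N)) (pr : Transaction N → Prop)
    [DecidablePred pr] :
    D.countP pr = ∑ t, if pr t then D.count t else 0 := by
  rw [Multiset.countP_eq_card_filter, ← sum_count_univ (D.filter pr)]
  refine Finset.sum_congr rfl fun t _ => ?_
  rw [Multiset.count_filter]

lemma lhd_eq_prod {N : ℕ} (p : Transaction N → ℝ) (D : Multiset (Transaction N)) :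
    lhd p D = ∏ t, p t ^ (D.count t) := by
  induction D using Multiset.induction_on with
  | empty => simp [lhd]
  | cons a s ih =>
    rw [lhd, Multiset.map_cons, Multiset.prod_cons]
    have : (s.map p).prod = lhd p s := rfl
    rw [this, ih]
    have hsplit : ∀ t, p t ^ ((a ::ₘ s).count t) =
        p t ^ (s.count t) * (if t = a then p t else 1) := by
      intro t
      rw [Multiset.count_cons]
      by_cases h : t = a <;> simp [h, pow_succ]
    rw [Finset.prod_congr rfl (fun t _ => hsplit t), Finset.prod_mul_distrib,
      Finset.prod_ite_eq' Finset.univ a p]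
    simp [mul_comm]

/-- Theorem 4.4: the likelihood of the maximum entropy model is maximized
exactly at the frequencies consistent with the data. -/
theorem maxent_likelihood_maximized_at_consistent {N k : ℕ} (hN : 1 ≤ N)
    (X : Fin k → Finset (Fin N))
    (D : Multiset (Transaction N)) (hD : D ≠ 0)
    (f : Fin k → ℝ) (hf : ∀ i, f i ∈ Set.Icc (0 : ℝ) 1)
    -- `p` is a maximum-entropy distribution for `⟨C, Φ⟩`:
    (p : Transaction N → ℝ) (hp : IsDistr p)
    (hpC : ∀ i, probOne p (X i) = f i)
    (hpMax : ∀ q : Transaction N → ℝ, IsDistr q → (∀ i, probOne q (X i) = f i) →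
      entropy q ≤ entropy p)
    -- `phat` is a maximum-entropy distribution for `⟨C, Φ̂⟩` with `Φ̂ᵢ = fr(Xᵢ|D)`:
    (phat : Transaction N → ℝ) (hphat : IsDistr phat)
    (hphatC : ∀ i, probOne phat (X i) = freq (X i) D)
    (hphatMax : ∀ q : Transaction N → ℝ, IsDistr q →
      (∀ i, probOne q (X i) = freq (X i) D) → entropy q ≤ entropy phat) :
    lhd p D ≤ lhd phat D ∧
      (lhd p D = lhd phat D ↔ f = fun i => freq (X i) D) := by
  classical
  set n : ℝ := (Multiset.card D : ℝ) with hn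
  have hnpos : 0 < n := by
    rw [hn]
    exact_mod_cast Multiset.card_pos.mpr hD
  set qD : Transaction N → ℝ := fun t => (D.count t : ℝ) / n with hqDdef
  have hcount_sum : ∑ t, (D.count t : ℝ) = n := by
    rw [hn, ← Nat.cast_sum]
    exact_mod_cast congrArg (fun m : ℕ => (m : ℝ)) (sum_count_univ D)
  have hqDsum : ∑ t, qD t = 1 := by
    rw [hqDdef, ← Finset.sum_div, hcount_sum]
    field_simp
  have hqDD : IsDistr qD := isDistr_of _ (fun t => by positivity) hqDsum
  have hqDC : ∀ i, probOne qD (X i) = freq (X i) D := by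
    intro i
    rw [probOne, freq, countP_eq_sum D (fun t => supports (X i) t)]
    push_cast
    rw [Finset.sum_div]
    refine Finset.sum_congr rfl fun t _ => ?_
    split_ifs <;> simp [hqDdef, hn]
  have hqD_ne_iff : ∀ t, qD t ≠ 0 ↔ D.count t ≠ 0 := by
    intro t
    rw [hqDdef]
    simp only [ne_eq, div_eq_zero_iff, Nat.cast_eq_zero]
    constructor
    · intro h hc; exact h (Or.inl hc)
    · intro h hc
      rcases hc with hc | hc
      · exact h hc
      · exact absurd hc (ne_of_gt hnpos)
  -- phat is positive on the support of the data
  have hphat_abs : ∀ t, qD t ≠ 0 → phat t ≠ 0 := by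
    intro t ht hcon
    exact ht (maxent_support_subset X _ phat hphat hphatC hphatMax qD hqDD hqDC t hcon)
  have hphat_pos : ∀ t, D.count t ≠ 0 → 0 < phat t := by
    intro t h
    exact lt_of_le_of_ne (hphat.1 t).1 (Ne.symm (hphat_abs t ((hqD_ne_iff t).mpr h)))
  have hlhd_phat_pos : 0 < lhd phat D := by
    rw [lhd_eq_prod]
    apply Finset.prod_pos
    intro t _
    by_cases h : D.count t = 0
    · simp [h]
    · exact pow_pos (hphat_pos t h) _
  -- log of likelihood
  have log_lhd : ∀ r : Transaction N → ℝ, (∀ t, D.count t ≠ 0 → r t ≠ 0) →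
      Real.log (lhd r D) = n * ∑ t, qD t * Real.log (r t) := by
    intro r hne
    rw [lhd_eq_prod, Real.log_prod]
    · rw [Finset.mul_sum]
      refine Finset.sum_congr rfl fun t _ => ?_
      rw [Real.log_pow, hqDdef]
      by_cases h : D.count t = 0
      · simp [h]
      · field_simp
    · intro t _
      by_cases h : D.count t = 0
      · simp [h]
      · exact pow_ne_zero _ (hne t h)
  -- uniqueness direction: f = freq ⇒ p = phat
  have hunique : (f = fun i => freq (X i) D) → p = phat := by
    intro hfe
    apply maxent_unique X (fun i => freq (X i) D) p hp ?_ ?_ phat hphat hphatC hphatMax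
    · intro i
      show probOne p (X i) = freq (X i) D
      rw [hpC i]
      exact congrFun hfe i
    · intro q hq hqC
      apply hpMax q hq
      intro i
      rw [hfe]
      exact hqC i
  by_cases hcaseB : ∀ t, D.count t ≠ 0 → p t ≠ 0
  · -- Case B : p positive on the data
    obtain ⟨c, lam, hform⟩ := maxent_expForm X f p hp hpC hpMax
    obtain ⟨ch, lamh, hformh⟩ :=
      maxent_expForm X (fun i => freq (X i) D) phat hphat hphatC hphatMax
    have habs_qD_p : ∀ t, qD t ≠ 0 → p t ≠ 0 := fun t h => hcaseB t ((hqD_ne_iff t).mp h)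
    -- support transfer : supp phat ⊆ supp p
    have habs_phat_p : ∀ t, phat t ≠ 0 → p t ≠ 0 := by
      intro t ht
      by_contra hpt0
      set dd : Transaction N → ℝ := fun s => phat s - qD s with hdd
      obtain ⟨δ, hδpos, hδ⟩ := exists_pos_perturb' p dd (fun s => (hp.1 s).1)
        (by
          intro s hs
          have hqd0 : qD s = 0 := by
            by_contra hq0
            exact habs_qD_p s hq0 hs
          rw [hdd]
          simp only [hqd0, sub_zero]
          exact (hphat.1 s).1)
        (exists_ne_zero_of_distr p hp)
      set ε' := δ/2 with hε'
      set q' : Transaction N → ℝ := fun s => p s + ε' * dd s with hq'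
      have hq'D : IsDistr q' := by
        apply isDistr_of
        · exact hδ ε' (by positivity) (by rw [hε']; linarith)
        · rw [hq']
          simp only [Finset.sum_add_distrib, ← Finset.mul_sum, hp.2]
          have : ∑ s, dd s = 0 := by
            rw [hdd, Finset.sum_sub_distrib, hphat.2, hqDsum]
            ring
          rw [this]
          ring
      have hq'C : ∀ i, probOne q' (X i) = f i := by
        intro i
        rw [hq', probOne_linear, hpC]
        have : probOne dd (X i) = 0 := by
          rw [hdd, probOne_sub, hphatC, hqDC]
          ring
        rw [this]
        ring
      have := maxent_support_subset X f p hp hpC hpMax q' hq'D hq'C t hpt0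
      rw [hq'] at this
      simp only [hpt0, zero_add] at this
      have hqd0 : qD t = 0 := by
        by_contra hq0
        exact habs_qD_p t hq0 hpt0
      rw [hdd] at this
      simp only [hqd0, sub_zero] at this
      have hε'pos : 0 < ε' := by rw [hε']; linarith
      apply ht
      rcases mul_eq_zero.mp this with h | h
      · exact absurd h (ne_of_gt hε'pos)
      · exact h
    -- cross-entropy computations
    have A1 : ∑ t, qD t * Real.log (p t) = c + ∑ i, lam i * freq (X i) D := by
      rw [crossSum X p qD c lam hform habs_qD_p hqDsum]
      congr 1
      exact Finset.sum_congr rfl fun i _ => by rw [hqDC]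
    have A2 : ∑ t, phat t * Real.log (p t) = c + ∑ i, lam i * freq (X i) D := by
      rw [crossSum X p phat c lam hform habs_phat_p hphat.2]
      congr 1
      exact Finset.sum_congr rfl fun i _ => by rw [hphatC]
    have A3 : ∑ t, qD t * Real.log (phat t) = ch + ∑ i, lamh i * freq (X i) D := by
      rw [crossSum X phat qD ch lamh hformh hphat_abs hqDsum]
      congr 1
      exact Finset.sum_congr rfl fun i _ => by rw [hqDC]
    have A4 : ∑ t, phat t * Real.log (phat t) = ch + ∑ i, lamh i * freq (X i) D := by
      rw [crossSum X phat phat ch lamh hformh (fun t h => h) hphat.2]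
      congr 1
      exact Finset.sum_congr rfl fun i _ => by rw [hphatC]
    obtain ⟨hgle, hgeq⟩ := gibbs p phat hp hphat habs_phat_p
    have key : ∑ t, qD t * Real.log (p t) ≤ ∑ t, qD t * Real.log (phat t) := by
      rw [A1, ← A2, A3, ← A4]
      exact hgle
    have hp_posD : ∀ t, D.count t ≠ 0 → 0 < p t := by
      intro t h
      exact lt_of_le_of_ne (hp.1 t).1 (Ne.symm (hcaseB t h))
    have hlhd_p_pos : 0 < lhd p D := by
      rw [lhd_eq_prod]
      apply Finset.prod_pos
      intro t _
      by_cases h : D.count t = 0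
      · simp [h]
      · exact pow_pos (hp_posD t h) _
    have hlogp := log_lhd p hcaseB
    have hlogph := log_lhd phat (fun t h => ne_of_gt (hphat_pos t h))
    have hloglhd : Real.log (lhd p D) ≤ Real.log (lhd phat D) := by
      rw [hlogp, hlogph]
      exact mul_le_mul_of_nonneg_left key hnpos.le
    have hineq : lhd p D ≤ lhd phat D :=
      (Real.log_le_log_iff hlhd_p_pos hlhd_phat_pos).mp hloglhd
    refine ⟨hineq, ?_, fun hfe => by rw [hunique hfe]⟩
    · intro heq
      have hlogeq : Real.log (lhd p D) = Real.log (lhd phat D) := by rw [heq]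
      rw [hlogp, hlogph] at hlogeq
      have hsumeq : ∑ t, qD t * Real.log (p t) = ∑ t, qD t * Real.log (phat t) :=
        mul_left_cancel₀ (ne_of_gt hnpos) hlogeq
      have : ∑ t, phat t * Real.log (p t) = ∑ t, phat t * Real.log (phat t) := by
        rw [A2, A4, ← A1, ← A3]
        exact hsumeq
      have hpe : p = phat := hgeq this
      funext i
      show f i = freq (X i) D
      rw [← hpC i, hpe, hphatC i]
  · -- Case A : p vanishes somewhere on the data
    push_neg at hcaseB
    obtain ⟨t0, hc0, hp0⟩ := hcaseB
    have hlhd0 : lhd p D = 0 := by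
      rw [lhd_eq_prod]
      apply Finset.prod_eq_zero (Finset.mem_univ t0)
      rw [hp0]
      exact zero_pow hc0
    refine ⟨by rw [hlhd0]; exact hlhd_phat_pos.le, ?_, fun hfe => by rw [hunique hfe]⟩
    intro heq
    rw [hlhd0] at heq
    exact absurd heq.symm (ne_of_gt hlhd_phat_pos)
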